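/- In a well-founded abstract argumentation framework, every admissible set of arguments is contained in every complete extension. -/

import Mathlib

/-- A set of arguments `S` attacks an argument `α` if some `β ∈ S` attacks `α`. -/
def attacks {A : Type*} (R : A → A → Prop) (S : Set A) (α : A) : Prop :=
  ∃ β ∈ S, R β α

/-- A set of arguments `S` is conflict-free if no argument in `S` is attacked by `S`. -/
def conflictFree {A : Type*} (R : A → A → Prop) (S : Set A) : Prop :=
  ∀ β ∈ S, ¬ attacks R S β

/-- An argument `α` is acceptable w.r.t. `S` if every attacker of `α` is attacked by `S`. -/
def acceptable {A : Type*} (R : A → A → Prop) (α : A) (S : Set A) : Prop :=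
  ∀ β, R β α → attacks R S β

/-- A set `S` is admissible if it is conflict-free and every argument in `S`
is acceptable with respect to `S`. -/
def admissible {A : Type*} (R : A → A → Prop) (S : Set A) : Prop :=
  conflictFree R S ∧ ∀ α ∈ S, acceptable R α S

/-- A set `S` is a complete extension if it is admissible and every argument
acceptable with respect to `S` belongs to `S`. -/
def completeExt {A : Type*} (R : A → A → Prop) (S : Set A) : Prop :=
  admissible R S ∧ ∀ α, acceptable R α S → α ∈ S

/-- An AF is well-founded if there is no infinite sequence `α₀, α₁, …`
with `(α_{i+1}, α_i) ∈ R` for all `i`. -/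
def wellFoundedAF {A : Type*} (R : A → A → Prop) : Prop :=
  ¬ ∃ f : ℕ → A, ∀ i : ℕ, R (f (i + 1)) (f i)

lemma wellFoundedAF.toWellFounded {A : Type*} {R : A → A → Prop}
    (hwf : wellFoundedAF R) : WellFounded R := by
  by_contra h
  apply hwf
  have : ∃ a, ¬ Acc R a := by
    by_contra h'
    push_neg at h'
    exact h ⟨h'⟩
  obtain ⟨a, ha⟩ := this
  have step : ∀ x : {a : A // ¬ Acc R a}, ∃ y : {a : A // ¬ Acc R a}, R y.1 x.1 := by
    rintro ⟨x, hx⟩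
    obtain ⟨b, hb, hr⟩ := exists_not_acc_lt_of_not_acc hx
    exact ⟨⟨b, hb⟩, hr⟩
  choose g hg using step
  refine ⟨fun n => (g^[n] ⟨a, ha⟩).1, fun i => ?_⟩
  simp only [Function.iterate_succ_apply']
  exact hg _

/-- In a well-founded AF, every admissible set of arguments is contained in
every complete extension. -/
theorem wellFounded_admissible_subset_complete {A : Type*} (R : A → A → Prop)
    (hwf : wellFoundedAF R) (T S : Set A)
    (hT : admissible R T) (hS : completeExt R S) : T ⊆ S := by
  have hwf' : WellFounded (Relation.TransGen R) := (hwf.toWellFounded).transGen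
  intro α hα
  induction α using hwf'.induction with
  | _ α IH =>
    apply hS.2
    intro β hβ
    obtain ⟨γ, hγT, hγβ⟩ := hT.2 α hα β hβ
    have hγS : γ ∈ S :=
      IH γ (Relation.TransGen.head hγβ (Relation.TransGen.single hβ)) hγT
    exact ⟨γ, hγS, hγβ⟩
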